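/- As polynomials in ℝ[x,y], the Jacobian determinant (∂P/∂x)(∂Q/∂y) − (∂P/∂y)(∂Q/∂x) of the Pinchuk map F = (P,Q) equals t² + (t + f·(13 + 15h))² + f². -/
import Mathlib


open MvPolynomial

/-- `t = xy − 1`, with `X 0 = x`, `X 1 = y`. -/
noncomputable def tP : MvPolynomial (Fin 2) ℝ := X 0 * X 1 - 1

/-- `h = t(xt + 1)`. -/
noncomputable def hP : MvPolynomial (Fin 2) ℝ := tP * (X 0 * tP + 1)

/-- `f = (xt + 1)²(t² + y)`. -/
noncomputable def fP : MvPolynomial (Fin 2) ℝ := (X 0 * tP + 1) ^ 2 * (tP ^ 2 + X 1)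

/-- `P = f + h`. -/
noncomputable def PP : MvPolynomial (Fin 2) ℝ := fP + hP

/-- The auxiliary polynomial `u(f,h)`. -/
noncomputable def uP : MvPolynomial (Fin 2) ℝ :=
  170 * fP * hP + 91 * hP ^ 2 + 195 * fP * hP ^ 2 + 69 * hP ^ 3 + 75 * fP * hP ^ 3 +
    C (75 / 4 : ℝ) * hP ^ 4

/-- `Q = −t² − 6th(h + 1) − u(f,h)`. -/
noncomputable def QP : MvPolynomial (Fin 2) ℝ := -tP ^ 2 - 6 * tP * hP * (hP + 1) - uP

lemma dt0 : pderiv 0 tP = X 1 := by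
  simp [tP, pderiv_X_self, pderiv_X_of_ne (by decide : (0:Fin 2) ≠ 1)]

lemma dt1 : pderiv 1 tP = X 0 := by
  simp [tP, pderiv_X_self, pderiv_X_of_ne (by decide : (1:Fin 2) ≠ 0)]

/-- The key algebraic relation `f(h − t) = h²(h + 1)`. -/
lemma hE : fP * (hP - tP) = hP ^ 2 * (hP + 1) := by
  simp only [fP, hP, tP]; ring

/-- The Jacobian of the pair `(f, h)` equals `−f`. -/
lemma hJ : pderiv 0 fP * pderiv 1 hP - pderiv 1 fP * pderiv 0 hP = -fP := by
  simp only [fP, hP]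
  simp only [map_add, map_sub, map_mul, map_neg, map_pow, map_ofNat, map_one,
    Derivation.leibniz, Derivation.leibniz_pow, pderiv_X_self,
    pderiv_X_of_ne (by decide : (0:Fin 2) ≠ 1), pderiv_X_of_ne (by decide : (1:Fin 2) ≠ 0),
    smul_eq_mul, nsmul_eq_mul, pderiv_one, pderiv_C, Nat.cast_ofNat, dt0, dt1]
  simp only [tP, mul_zero, zero_mul, mul_one, one_mul, add_zero, zero_add]
  ring

/-- The "Jacobian of `(f + h, t)`" identity. -/
lemma hG : (pderiv 0 fP + pderiv 0 hP) * X 0 - (pderiv 1 fP + pderiv 1 hP) * X 1 =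
    -tP + 3 * hP - fP + 3 * hP ^ 2 := by
  simp only [fP, hP]
  simp only [map_add, map_sub, map_mul, map_neg, map_pow, map_ofNat, map_one,
    Derivation.leibniz, Derivation.leibniz_pow, pderiv_X_self,
    pderiv_X_of_ne (by decide : (0:Fin 2) ≠ 1), pderiv_X_of_ne (by decide : (1:Fin 2) ≠ 0),
    smul_eq_mul, nsmul_eq_mul, pderiv_one, pderiv_C, Nat.cast_ofNat, dt0, dt1]
  simp only [tP, mul_zero, zero_mul, mul_one, one_mul, add_zero, zero_add]
  ring

lemma dnum (i : Fin 2) (n : ℕ) [n.AtLeastTwo] :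
    pderiv i (no_index (OfNat.ofNat n) : MvPolynomial (Fin 2) ℝ) = 0 := by
  rw [← Nat.cast_ofNat (R := MvPolynomial (Fin 2) ℝ) (n := n)]
  exact Derivation.map_natCast _ _

lemma hC : (C (75 / 4 : ℝ) : MvPolynomial (Fin 2) ℝ) * 4 = 75 := by
  rw [← map_ofNat (C : ℝ →+* MvPolynomial (Fin 2) ℝ) 4,
    ← map_ofNat (C : ℝ →+* MvPolynomial (Fin 2) ℝ) 75, ← C_mul]
  norm_num

lemma dP (i : Fin 2) : pderiv i PP = pderiv i fP + pderiv i hP := by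
  simp [PP]

lemma dQ (i : Fin 2) : pderiv i QP =
    (-2 * tP - 6 * hP * (hP + 1)) * pderiv i tP +
    (-6 * tP * (2 * hP + 1) - (170 * fP + 182 * hP + 390 * fP * hP + 207 * hP ^ 2 +
      225 * fP * hP ^ 2 + 75 * hP ^ 3)) * pderiv i hP +
    (-(170 * hP + 195 * hP ^ 2 + 75 * hP ^ 3)) * pderiv i fP := by
  simp only [QP, uP]
  simp only [map_add, map_sub, map_mul, map_neg, map_pow, map_ofNat, map_one,
    Derivation.leibniz, Derivation.leibniz_pow, smul_eq_mul, nsmul_eq_mul,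
    pderiv_one, pderiv_C, Nat.cast_ofNat, dnum, mul_zero, zero_mul, add_zero, zero_add]
  linear_combination (-(hP ^ 3 * pderiv i hP)) * hC

theorem pinchuk_jacobian_identity :
    pderiv 0 PP * pderiv 1 QP - pderiv 1 PP * pderiv 0 QP =
      tP ^ 2 + (tP + fP * (13 + 15 * hP)) ^ 2 + fP ^ 2 := by
  rw [dP 0, dP 1, dQ 0, dQ 1, dt0, dt1]
  linear_combination (-2 * tP - 6 * hP * (hP + 1)) * hG +
    ((-6 * tP * (2 * hP + 1) - (170 * fP + 182 * hP + 390 * fP * hP + 207 * hP ^ 2 +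
      225 * fP * hP ^ 2 + 75 * hP ^ 3)) - (-(170 * hP + 195 * hP ^ 2 + 75 * hP ^ 3))) * hJ +
    (18 * (hP + 1)) * hE
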